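/- If A₁ and A₂ are finite sets, then the consequence relation of the fibred matrix M_(λ,μ) is finitary: Γ ⊨ φ implies Γ₀ ⊨ φ for some finite Γ₀ ⊆ Γ. -/
import Mathlib


set_option autoImplicit false

namespace Fibring

/-- Propositional formulas over a signature `C` with arity function `ar`. -/
inductive Fm (C : Type) (ar : C → ℕ) : Type
  | var : ℕ → Fm C ar
  | app : (c : C) → (Fin (ar c) → Fm C ar) → Fm C ar

/-- Homomorphic extension of a valuation `v` to all formulas, relative to an
interpretation `I` of the connectives. -/
def eval {C A : Type} {ar : C → ℕ}
    (I : (c : C) → (Fin (ar c) → A) → A) (v : ℕ → A) : Fm C ar → A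
  | .var n => v n
  | .app c args => I c fun i => eval I v (args i)

/-- Matrix consequence relation. -/
def Mdl {C A : Type} {ar : C → ℕ}
    (I : (c : C) → (Fin (ar c) → A) → A) (D : Set A)
    (Γ : Set (Fm C ar)) (φ : Fm C ar) : Prop :=
  ∀ v : ℕ → A, (∀ ψ ∈ Γ, eval I v ψ ∈ D) → eval I v φ ∈ D

/-- Substitution. -/
def subst {C : Type} {ar : C → ℕ} (σ : ℕ → Fm C ar) : Fm C ar → Fm C ar
  | .var n => σ n
  | .app c args => .app c fun i => subst σ (args i)

variable {C₁ C₂ A₁ A₂ : Type} {ar₁ : C₁ → ℕ} {ar₂ : C₂ → ℕ}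

/-- The coercion `∗_μ : A₁ ⊎ A₂ → A₁`. -/
def starMu (mu : A₂ → A₁) : A₁ ⊕ A₂ → A₁ := Sum.elim id mu

/-- The coercion `∗_λ : A₁ ⊎ A₂ → A₂`. -/
def starLa (lam : A₁ → A₂) : A₁ ⊕ A₂ → A₂ := Sum.elim lam id

/-- Interpretation of the fibred matrix `M_(λ,μ)`. -/
def fibInterp (I₁ : (c : C₁) → (Fin (ar₁ c) → A₁) → A₁)
    (I₂ : (c : C₂) → (Fin (ar₂ c) → A₂) → A₂)
    (lam : A₁ → A₂) (mu : A₂ → A₁) :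
    (c : C₁ ⊕ C₂) → (Fin (Sum.elim ar₁ ar₂ c) → A₁ ⊕ A₂) → A₁ ⊕ A₂
  | .inl c, args => Sum.inl (I₁ c fun i => starMu mu (args i))
  | .inr c, args => Sum.inr (I₂ c fun i => starLa lam (args i))

/-- Designated values of the fibred matrix: `D₁ ⊎ D₂`. -/
def Dfib (D₁ : Set A₁) (D₂ : Set A₂) : Set (A₁ ⊕ A₂) :=
  Sum.inl '' D₁ ∪ Sum.inr '' D₂

/-- Admissible fibring pairs: `λ` and `μ` preserve and reflect designatedness. -/
def Admissible (D₁ : Set A₁) (D₂ : Set A₂) (lam : A₁ → A₂) (mu : A₂ → A₁) : Prop :=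
  (∀ x, lam x ∈ D₂ ↔ x ∈ D₁) ∧ (∀ y, mu y ∈ D₁ ↔ y ∈ D₂)

/-- Recursive extension of a simple fibred valuation to the fibred language. -/
def sfvExt (I₁ : (c : C₁) → (Fin (ar₁ c) → A₁) → A₁)
    (I₂ : (c : C₂) → (Fin (ar₂ c) → A₂) → A₂)
    (lam : A₁ → A₂) (mu : A₂ → A₁) (v : ℕ → A₁ ⊕ A₂) :
    Fm (C₁ ⊕ C₂) (Sum.elim ar₁ ar₂) → A₁ ⊕ A₂
  | .var n => v n
  | .app (.inl c) args =>
      Sum.inl (I₁ c fun i => starMu mu (sfvExt I₁ I₂ lam mu v (args i)))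
  | .app (.inr c) args =>
      Sum.inr (I₂ c fun i => starLa lam (sfvExt I₁ I₂ lam mu v (args i)))

/-- Inclusion of `L(C₁)` into the fibred language `L(C₁ ⊎ C₂)`. -/
def inj₁ (ar₂ : C₂ → ℕ) : Fm C₁ ar₁ → Fm (C₁ ⊕ C₂) (Sum.elim ar₁ ar₂)
  | .var n => .var n
  | .app c args => .app (Sum.inl c) fun i => inj₁ ar₂ (args i)

/-- `Repl c₁ c₂ h φ ψ`: `ψ` results from `φ` by replacing exactly one occurrence
of `c₁` by `c₂`. -/
inductive Repl {C : Type} {ar : C → ℕ} (c₁ c₂ : C) (h : ar c₁ = ar c₂) :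
    Fm C ar → Fm C ar → Prop
  | top (args : Fin (ar c₁) → Fm C ar) :
      Repl c₁ c₂ h (.app c₁ args) (.app c₂ fun i => args (Fin.cast h.symm i))
  | congr (c : C) (args args' : Fin (ar c) → Fm C ar) (j : Fin (ar c))
      (hj : Repl c₁ c₂ h (args j) (args' j))
      (hother : ∀ i, i ≠ j → args i = args' i) :
      Repl c₁ c₂ h (.app c args) (.app c args')

/-- `(c₁,c₂)`-associated formulas: a finite chain of single replacements of
`c₁` by `c₂` or vice versa (including equality). -/
def Assoc {C : Type} {ar : C → ℕ} (c₁ c₂ : C) (h : ar c₁ = ar c₂)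
    (φ₁ φ₂ : Fm C ar) : Prop :=
  Relation.EqvGen (Repl c₁ c₂ h) φ₁ φ₂



theorem eval_continuous {C A : Type} {ar : C → ℕ} [TopologicalSpace A] [DiscreteTopology A]
    (I : (c : C) → (Fin (ar c) → A) → A) (ψ : Fm C ar) :
    Continuous fun v : ℕ → A => eval I v ψ := by
  induction ψ with
  | var n => exact continuous_apply n
  | app c args ih =>
    have hc : Continuous fun v : ℕ → A => (fun i => eval I v (args i)) :=
      continuous_pi fun i => ih i
    exact (continuous_of_discreteTopology (f := I c)).comp hc

/-- if the supports are finite then the consequence relation of the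
fibred matrix is finitary. -/
theorem fibring_finitary
    {C₁ C₂ A₁ A₂ : Type} [Finite A₁] [Finite A₂]
    {ar₁ : C₁ → ℕ} {ar₂ : C₂ → ℕ}
    (I₁ : (c : C₁) → (Fin (ar₁ c) → A₁) → A₁)
    (I₂ : (c : C₂) → (Fin (ar₂ c) → A₂) → A₂)
    (D₁ : Set A₁) (D₂ : Set A₂)
    (lam : A₁ → A₂) (mu : A₂ → A₁)
    (Γ : Set (Fm (C₁ ⊕ C₂) (Sum.elim ar₁ ar₂)))
    (φ : Fm (C₁ ⊕ C₂) (Sum.elim ar₁ ar₂)) :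
    Mdl (fibInterp I₁ I₂ lam mu) (Dfib D₁ D₂) Γ φ →
      ∃ Γ₀ ⊆ Γ, Γ₀.Finite ∧ Mdl (fibInterp I₁ I₂ lam mu) (Dfib D₁ D₂) Γ₀ φ := by
  intro h
  letI : TopologicalSpace (A₁ ⊕ A₂) := ⊥
  haveI : DiscreteTopology (A₁ ⊕ A₂) := ⟨rfl⟩
  haveI : Finite (A₁ ⊕ A₂) := inferInstance
  set I := fibInterp I₁ I₂ lam mu with hI
  set D := Dfib D₁ D₂ with hD
  have hcont : ∀ ψ, Continuous fun v : ℕ → (A₁ ⊕ A₂) => eval I v ψ := eval_continuous I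
  have hempty : ((fun v => eval I v φ) ⁻¹' Dᶜ) ∩
      ⋂ ψ : Γ, ((fun v => eval I v ψ.1) ⁻¹' D) = ∅ := by
    ext v
    simp only [Set.mem_inter_iff, Set.mem_iInter, Set.mem_preimage, Set.mem_empty_iff_false,
      Set.mem_compl_iff, iff_false, not_and]
    intro hφ hΓ
    exact hφ (h v fun ψ hψ => hΓ ⟨ψ, hψ⟩)
  have hK : IsCompact ((fun v => eval I v φ) ⁻¹' Dᶜ) :=
    ((isClosed_discrete _).preimage (hcont φ)).isCompact
  obtain ⟨t, ht⟩ := hK.elim_finite_subfamily_closed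
    (fun ψ : Γ => (fun v => eval I v ψ.1) ⁻¹' D)
    (fun ψ => (isClosed_discrete _).preimage (hcont _)) hempty
  refine ⟨(↑) '' (t : Set Γ), ?_, t.finite_toSet.image _, ?_⟩
  · rintro _ ⟨ψ, _, rfl⟩; exact ψ.2
  · intro v hv
    by_contra hφ
    have hmem : v ∈ ((fun v => eval I v φ) ⁻¹' Dᶜ) ∩
        ⋂ ψ ∈ t, ((fun v' => eval I v' (ψ : Γ).1) ⁻¹' D) := by
      refine ⟨hφ, ?_⟩
      simp only [Set.mem_iInter, Set.mem_preimage]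
      intro ψ hψ
      exact hv ψ.1 ⟨ψ, hψ, rfl⟩
    rw [ht] at hmem
    exact hmem


end Fibring
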